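/- arXiv:1404.0331 — 3 statements merged into one kernel-verified Lean document; each statement's English description precedes it below -/
import Mathlib

section
/- Let h₁, …, h_k : ℤ → C[t^{±1}] be functions, each a finite C[t^{±1}]-linear combination of functions n ↦ t^{2jn} for integers j. Then there exists an operator P, a Laurent polynomial in the shift operator L with coefficients in C[t^{±1}], such that P is invariant under the substitution L ↦ L^{−1} combined with reversing the order of factors (σ-invariant), P evaluated at t = −1 equals (L + L^{−1} − 2)^m for some m ≥ 1, and P h_i = 0 for all i = 1, …, k. -/
open LaurentPolynomial

/-- Evaluation of a Laurent polynomial in `t` at `t = -1`. -/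
noncomputable def evalNegOne (p : LaurentPolynomial ℂ) : ℂ :=
  p.coeff.sum fun j a => a * (-1 : ℂ) ^ j

/-- `InSpan f` means `f : ℤ → ℂ[t^{±1}]` is a finite `ℂ[t^{±1}]`-linear combination of the
functions `n ↦ t^{2jn}`, `j ∈ ℤ`. -/
def InSpan (f : ℤ → LaurentPolynomial ℂ) : Prop :=
  ∃ d : ℤ →₀ LaurentPolynomial ℂ, ∀ n : ℤ, f n = d.sum fun j a => a * T (2 * j * n)

/-- The action of a Laurent polynomial `P = Σ_j c_j L^j` in the shift operator `L`
(with coefficients `c_j ∈ ℂ[t^{±1}]`) on functions `ℤ → ℂ[t^{±1}]`. -/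
noncomputable def shiftAct (c : ℤ →₀ LaurentPolynomial ℂ) (h : ℤ → LaurentPolynomial ℂ)
    (n : ℤ) : LaurentPolynomial ℂ :=
  c.sum fun j a => a * h (n + j)

namespace SymAnnihilator

noncomputable section

abbrev R := LaurentPolynomial ℂ

/-- The factor `L + L⁻¹ - t^{2j} - t^{-2j}`, as an element of `(ℂ[t^{±1}])[L^{±1}]`. -/
def fac (j : ℤ) : LaurentPolynomial R :=
  T 1 + T (-1) - C ((T (2 * j) : R) + T (-(2 * j)))

lemma shiftAct_single (j : ℤ) (a : R) (h : ℤ → R) (n : ℤ) :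
    shiftAct (Finsupp.single j a) h n = a * h (n + j) := by
  classical
  exact Finsupp.sum_single_index (by simp)

lemma shiftAct_mul (c d : LaurentPolynomial R) (h : ℤ → R) (n : ℤ) :
    shiftAct (c * d).coeff h n = shiftAct c.coeff (fun m => shiftAct d.coeff h m) n := by
  classical
  rw [AddMonoidAlgebra.mul_def c d]
  simp only [AddMonoidAlgebra.coeff_finsuppSum, AddMonoidAlgebra.coeff_single]
  show Finsupp.sum _ (fun j a => a * h (n + j)) = _
  rw [Finsupp.sum_sum_index (fun _ => by simp) (fun _ _ _ => by rw [add_mul])]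
  unfold shiftAct
  refine Finsupp.sum_congr fun j₁ _ => ?_
  rw [Finsupp.sum_sum_index (fun _ => by simp) (fun _ _ _ => by rw [add_mul]),
    Finsupp.mul_sum]
  refine Finsupp.sum_congr fun j₂ _ => ?_
  rw [Finsupp.sum_single_index (by simp), mul_assoc, add_assoc]

/-- The factor `fac j` annihilates `n ↦ a * t^{2jn}`. -/
lemma fac_annihilates (j : ℤ) (a : R) (n : ℤ) :
    shiftAct (fac j).coeff (fun m => a * T (2 * j * m)) n = 0 := by
  classical
  have hsub : ∀ (c d : LaurentPolynomial R) (h : ℤ → R) (n : ℤ),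
      shiftAct (c - d).coeff h n = shiftAct c.coeff h n - shiftAct d.coeff h n := by
    intro c d h n
    rw [AddMonoidAlgebra.coeff_sub]
    exact Finsupp.sum_sub_index (fun _ _ _ => by rw [sub_mul])
  have hadd : ∀ (c d : LaurentPolynomial R) (h : ℤ → R) (n : ℤ),
      shiftAct (c + d).coeff h n = shiftAct c.coeff h n + shiftAct d.coeff h n := by
    intro c d h n
    rw [AddMonoidAlgebra.coeff_add]
    exact Finsupp.sum_add_index' (fun _ => by simp) (fun _ _ _ => by rw [add_mul])
  have hT : ∀ k : ℤ, (T k : LaurentPolynomial R).coeff = Finsupp.single k (1 : R) := fun _ => rfl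
  have hC : (C ((T (2 * j) : R) + T (-(2 * j))) : LaurentPolynomial R).coeff
      = Finsupp.single 0 ((T (2 * j) : R) + T (-(2 * j))) := by
    rw [← LaurentPolynomial.single_eq_C]
    rfl
  rw [fac, hsub, hadd, hT, hT, hC, shiftAct_single, shiftAct_single, shiftAct_single]
  have e1 : 2 * j * (n + 1) = 2 * j * n + 2 * j := by ring
  have e2 : 2 * j * (n + -1) = 2 * j * n + -(2 * j) := by ring
  have e3 : 2 * j * (n + 0) = 2 * j * n := by ring
  rw [e1, e2, e3, T_add, T_add]
  ring

/-- `shiftAct` commutes with `Finsupp.sum` in the function argument. -/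
lemma shiftAct_finsuppSum (c : LaurentPolynomial R) (d : ℤ →₀ R)
    (g : ℤ → R → ℤ → R) (n : ℤ) :
    shiftAct c.coeff (fun m => d.sum fun j a => g j a m) n
      = d.sum fun j a => shiftAct c.coeff (g j a) n := by
  classical
  unfold shiftAct
  rw [Finsupp.sum_comm]
  refine Finsupp.sum_congr fun j₁ _ => ?_
  rw [Finsupp.mul_sum]

/-- Evaluation at `t = -1` as a ring hom on `ℂ[t^{±1}]`. -/
def evalHom : R →+* ℂ :=
  AddMonoidAlgebra.liftNCRingHom (RingHom.id ℂ)
    ((Units.coeHom ℂ).comp (zpowersHom ℂˣ (-1))) (fun _ _ => Commute.all _ _)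

lemma evalHom_T (m : ℤ) : evalHom (T m) = (-1 : ℂ) ^ m := by
  have : (T m : R) = AddMonoidAlgebra.single m (1 : ℂ) := rfl
  rw [this]
  show AddMonoidAlgebra.liftNC _ _ (AddMonoidAlgebra.single m (1 : ℂ)) = _
  rw [AddMonoidAlgebra.liftNC_single]
  simp [zpowersHom_apply]

lemma evalNegOne_eq (p : R) : evalNegOne p = evalHom p := by
  classical
  induction p using AddMonoidAlgebra.induction_linear with
  | zero => simp [evalNegOne]
  | add p q hp hq =>
    rw [map_add, ← hp, ← hq]
    unfold evalNegOne
    rw [AddMonoidAlgebra.coeff_add]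
    exact Finsupp.sum_add_index' (fun _ => by simp) (fun _ _ _ => by rw [add_mul])
  | single j a =>
    have h2 : evalNegOne (AddMonoidAlgebra.single j a) = a * (-1 : ℂ) ^ j :=
      Finsupp.sum_single_index (by simp)
    have h3 : evalHom (AddMonoidAlgebra.single j a : R) = a * (-1 : ℂ) ^ j := by
      show AddMonoidAlgebra.liftNC _ _ (AddMonoidAlgebra.single j a) = _
      rw [AddMonoidAlgebra.liftNC_single]
      simp [zpowersHom_apply]
    rw [h2, h3]

/-- `T` as a monoid hom from `Multiplicative ℤ`. -/
def Tmul : Multiplicative ℤ →* LaurentPolynomial ℂ where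
  toFun x := T x.toAdd
  map_one' := T_zero
  map_mul' a b := T_add _ _

/-- Specialization at `t = -1`, as a ring hom `(ℂ[t^{±1}])[L^{±1}] → ℂ[L^{±1}]`. -/
def specHom : LaurentPolynomial R →+* LaurentPolynomial ℂ :=
  AddMonoidAlgebra.liftNCRingHom ((C : ℂ →+* LaurentPolynomial ℂ).comp evalHom)
    Tmul (fun _ _ => Commute.all _ _)

lemma specHom_single (j : ℤ) (a : R) :
    specHom (AddMonoidAlgebra.single j a) = C (evalHom a) * T j := by
  show AddMonoidAlgebra.liftNC _ _ (AddMonoidAlgebra.single j a) = _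
  rw [AddMonoidAlgebra.liftNC_single]
  rfl

lemma spec_eq (P : LaurentPolynomial R) :
    (P.coeff.sum fun j a => C (evalNegOne a) * T j) = specHom P := by
  classical
  induction P using AddMonoidAlgebra.induction_linear with
  | zero => simp
  | add p q hp hq =>
      rw [AddMonoidAlgebra.coeff_add, map_add, ← hp, ← hq]
      refine Finsupp.sum_add_index' (fun _ => by simp [evalNegOne]) (fun i b₁ b₂ => ?_)
      have : evalNegOne (b₁ + b₂) = evalNegOne b₁ + evalNegOne b₂ := by
        rw [evalNegOne_eq, evalNegOne_eq, evalNegOne_eq, map_add]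
      rw [this, map_add, add_mul]
  | single j a =>
    have h2 : ((AddMonoidAlgebra.single j a : LaurentPolynomial R).coeff.sum
        fun j a => C (evalNegOne a) * T j)
        = C (evalNegOne a) * T j := Finsupp.sum_single_index (by simp [evalNegOne])
    rw [h2, specHom_single, evalNegOne_eq]

lemma specHom_fac (j : ℤ) : specHom (fac j) = T 1 + T (-1) - 2 := by
  have hT : ∀ k : ℤ, specHom (T k) = T k := by
    intro k
    have : (T k : LaurentPolynomial R) = AddMonoidAlgebra.single k (1 : R) := rfl
    rw [this, specHom_single, map_one, map_one, one_mul]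
  have hC : specHom (C ((T (2 * j) : R) + T (-(2 * j)))) = 2 := by
    have : (C ((T (2 * j) : R) + T (-(2 * j))) : LaurentPolynomial R)
        = AddMonoidAlgebra.single 0 ((T (2 * j) : R) + T (-(2 * j))) := by
      rw [← LaurentPolynomial.single_eq_C]
    rw [this, specHom_single, T_zero, mul_one, map_add, evalHom_T, evalHom_T]
    have h1 : (-1 : ℂ) ^ (2 * j) = 1 := by
      rw [zpow_mul]; norm_num
    have h2 : (-1 : ℂ) ^ (-(2 * j)) = 1 := by
      rw [zpow_neg, zpow_mul]; norm_num
    rw [h1, h2, one_add_one_eq_two]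
    exact map_ofNat _ 2
  rw [fac, map_sub, map_add, hT, hT, hC]

/-- The negation ring hom on `(ℂ[t^{±1}])[L^{±1}]`, i.e. `L ↦ L⁻¹`. -/
def sigma : LaurentPolynomial R →+* LaurentPolynomial R :=
  AddMonoidAlgebra.mapDomainRingHom R (AddMonoidHom.mk' (Neg.neg : ℤ → ℤ) (by intro a b; ring))

lemma sigma_apply (P : LaurentPolynomial R) (j : ℤ) : (sigma P).coeff j = P.coeff (-j) := by
  have : (sigma P).coeff = Finsupp.mapDomain (Neg.neg : ℤ → ℤ) P.coeff := rfl
  rw [this]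
  have h := Finsupp.mapDomain_apply (f := (Neg.neg : ℤ → ℤ)) neg_injective P.coeff (-j)
  simpa using h

lemma sigma_fac (j : ℤ) : sigma (fac j) = fac j := by
  have hT : ∀ k : ℤ, sigma (T k) = T (-k) := by
    intro k
    have : (T k : LaurentPolynomial R) = AddMonoidAlgebra.single k (1 : R) := rfl
    rw [this]
    show AddMonoidAlgebra.mapDomain (Neg.neg : ℤ → ℤ) (AddMonoidAlgebra.single k (1 : R)) = _
    rw [AddMonoidAlgebra.mapDomain_single]
    rfl
  have hC : ∀ a : R, sigma (C a) = C a := by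
    intro a
    have : (C a : LaurentPolynomial R) = AddMonoidAlgebra.single 0 a := by
      rw [← LaurentPolynomial.single_eq_C]
    rw [this]
    show AddMonoidAlgebra.mapDomain (Neg.neg : ℤ → ℤ) (AddMonoidAlgebra.single 0 a) = _
    rw [AddMonoidAlgebra.mapDomain_single]
    norm_num
  rw [fac, map_sub, map_add, hT, hT, hC, neg_neg]
  ring

end

end SymAnnihilator

open SymAnnihilator in
/-- Given functions `h₁, …, h_k : ℤ → ℂ[t^{±1}]`, each a finite `ℂ[t^{±1}]`-linear
combination of `n ↦ t^{2jn}`, there is a Laurent polynomial `P = Σ c_j L^j` in the shift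
operator `L` which is σ-invariant (`c_j = c_{-j}`), whose specialization at `t = -1` equals
`(L + L⁻¹ - 2)^m` for some `m ≥ 1`, and which annihilates every `h_i`. -/
theorem exists_symmetric_annihilator (k : ℕ) (h : Fin k → (ℤ → LaurentPolynomial ℂ))
    (hh : ∀ i, InSpan (h i)) :
    ∃ (c : ℤ →₀ LaurentPolynomial ℂ) (m : ℕ), 1 ≤ m ∧
      (∀ j : ℤ, c j = c (-j)) ∧
      (c.sum fun j a => C (evalNegOne a) * T j) = (T 1 + T (-1) - 2) ^ m ∧
      (∀ i : Fin k, ∀ n : ℤ, shiftAct c (h i) n = 0) := by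
  classical
  -- the coefficient finsupps for each `h i`
  set d : Fin k → (ℤ →₀ LaurentPolynomial ℂ) := fun i => (hh i).choose with hd
  have hdspec : ∀ i, ∀ n : ℤ, h i n = (d i).sum fun j a => a * T (2 * j * n) :=
    fun i => (hh i).choose_spec
  -- the set of exponents
  set S : Finset ℤ := Finset.univ.biUnion (fun i : Fin k => (d i).support) with hS
  -- the operator
  set P : LaurentPolynomial R := fac 0 * ∏ j ∈ S, fac j with hP
  refine ⟨P.coeff, S.card + 1, Nat.le_add_left 1 S.card, ?_, ?_, ?_⟩
  · -- symmetry
    intro j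
    have hfix : sigma P = P := by
      rw [hP, map_mul, map_prod]
      simp only [sigma_fac]
    conv_lhs => rw [← hfix]
    rw [sigma_apply]
  · -- specialization at t = -1
    rw [spec_eq, hP, map_mul, map_prod]
    simp only [specHom_fac]
    rw [Finset.prod_const, pow_succ]
    ring
  · -- annihilation
    intro i n
    have hrw : shiftAct P.coeff (h i) n
        = shiftAct P.coeff (fun m => (d i).sum fun j a => a * T (2 * j * m)) n := by
      congr 1
      funext m
      exact hdspec i m
    rw [hrw, shiftAct_finsuppSum P (d i) (fun j a m => a * T (2 * j * m)) n]
    rw [Finsupp.sum]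
    refine Finset.sum_eq_zero fun j hj => ?_
    have hjS : j ∈ S := Finset.mem_biUnion.2 ⟨i, Finset.mem_univ i, hj⟩
    -- extract the factor `fac j` from `P`
    have hfacP : P = (fac 0 * ∏ j' ∈ S.erase j, fac j') * fac j := by
      rw [hP, ← Finset.mul_prod_erase S fac hjS]
      ring
    rw [hfacP, shiftAct_mul]
    have hz : (fun m => shiftAct (fac j).coeff (fun m' => (d i) j * T (2 * j * m')) m)
        = fun _ => 0 := by
      funext m
      exact fac_annihilates j ((d i) j) m
    rw [hz]
    unfold shiftAct
    simp
end

section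
/- Let f : ℤ → C[t^{±1}] and suppose ((L M^{2p} + t^{2p}) f)(n) is, as a function of n, a finite C[t^{±1}]-linear combination of functions n ↦ t^{2jn}. Then for every positive integer m, ((L^m M^{2pm} − (−1)^m t^{2pm²}) f)(n) is also such a finite linear combination. -/
open LaurentPolynomial

lemma inSpan_sub {f g : ℤ → LaurentPolynomial ℂ} (hf : InSpan f) (hg : InSpan g) :
    InSpan (fun n => f n - g n) := by
  obtain ⟨d, hd⟩ := hf
  obtain ⟨e, he⟩ := hg
  refine ⟨d - e, fun n => ?_⟩
  dsimp only
  rw [hd, he, Finsupp.sum_sub_index (h := fun j c => c * T (2 * j * n))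
    (fun a b₁ b₂ => sub_mul _ _ _)]

lemma inSpan_mulT_shift {f : ℤ → LaurentPolynomial ℂ} (hf : InSpan f) (a b k : ℤ) :
    InSpan fun n => T (2 * a * n + b) * f (n + k) := by
  obtain ⟨d, hd⟩ := hf
  refine ⟨d.sum fun j c => Finsupp.single (j + a) (c * T (b + 2 * j * k)), fun n => ?_⟩
  dsimp only
  rw [hd, Finsupp.mul_sum,
    Finsupp.sum_sum_index (h := fun j c => c * T (2 * j * n)) (fun i => zero_mul _)
      (fun i b₁ b₂ => add_mul _ _ _)]
  refine Finsupp.sum_congr fun j hj => ?_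
  rw [Finsupp.sum_single_index (h := fun j c => c * T (2 * j * n)) (zero_mul _)]
  rw [mul_left_comm, ← T_add, mul_assoc (d j), ← T_add]
  congr 1
  apply congrArg
  ring

/-- Lemma 4.1: if `(L M^{2p} + t^{2p}) f ∈ R[t^{±2n}]`, i.e. the function
`n ↦ t^{4p(n+1)} f(n+1) + t^{2p} f(n)` is a finite combination of `n ↦ t^{2jn}`, then for every
positive integer `m` so is `(L^m M^{2pm} - (-1)^m t^{2pm²}) f`, i.e. the function
`n ↦ t^{4pm(n+m)} f(n+m) - (-1)^m t^{2pm²} f(n)`. -/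
theorem power_recurrence_odd (p : ℤ) (f : ℤ → LaurentPolynomial ℂ)
    (hf : InSpan fun n => T (4 * p * (n + 1)) * f (n + 1) + T (2 * p) * f n) :
    ∀ m : ℕ, 0 < m →
      InSpan fun n =>
        T (4 * p * (m : ℤ) * (n + (m : ℤ))) * f (n + (m : ℤ)) -
          (-1) ^ m * T (2 * p * (m : ℤ) ^ 2) * f n := by
  intro m hm
  induction m, hm using Nat.le_induction with
  | base =>
      convert hf using 1
      funext n
      push_cast
      ring_nf
  | succ m hm ih =>
      have h1 := inSpan_mulT_shift hf (2 * p * m) (4 * p * m * (m + 1)) m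
      have h2 := inSpan_mulT_shift ih 0 (2 * p * (2 * m + 1)) 0
      have h3 := inSpan_sub h1 h2
      convert h3 using 1
      funext n
      push_cast
      ring_nf
      simp only [T_add]
      ring_nf
      simp only [T_pow]
      ring_nf
end

section
/- Let t = C[M^{±1}, L^{±1}], σ the involution with σ(M^k L^l) = M^{−k} L^{−l}, and A ∈ t with σ(A) = η M^a L^b A (η = ±1, a, b ∈ ℤ). Let I ⊆ t^σ be an ideal of the σ-invariant subring containing an element of the form M^{am} L^{bm} A^{2m} for some positive integer m. Then the σ-invariant part (A·t)^σ of the ideal of t generated by A is contained in the radical √I (radical taken in t^σ). -/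
open AddMonoidAlgebra

/-- The two-variable Laurent polynomial ring `ℂ[M^{±1}, L^{±1}]`. -/
noncomputable abbrev LP2 := AddMonoidAlgebra ℂ (ℤ × ℤ)

/-- The monomial `M^k L^l` in `ℂ[M^{±1}, L^{±1}]`. -/
noncomputable def mono (k l : ℤ) : LP2 := AddMonoidAlgebra.single (k, l) 1

/-- The involution `σ` of `ℂ[M^{±1}, L^{±1}]` with `σ(M^k L^l) = M^{-k} L^{-l}`. -/
noncomputable def σ₂ : LP2 ≃ₐ[ℂ] LP2 := AddMonoidAlgebra.domCongr ℂ ℂ (AddEquiv.neg (ℤ × ℤ))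

/-- The σ-invariant subring `t^σ` of `ℂ[M^{±1}, L^{±1}]`. -/
noncomputable def fixedSub : Subalgebra ℂ LP2 where
  carrier := {x | σ₂ x = x}
  mul_mem' := by intro x y hx hy; simp only [Set.mem_setOf_eq, map_mul] at *; rw [hx, hy]
  add_mem' := by intro x y hx hy; simp only [Set.mem_setOf_eq, map_add] at *; rw [hx, hy]
  algebraMap_mem' := by intro c; exact σ₂.commutes c

lemma sigma_invol (z : LP2) : σ₂ (σ₂ z) = z := by
  induction z using AddMonoidAlgebra.induction_linear with
  | zero => simp
  | add p q hp hq => simp [map_add, hp, hq]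
  | single p c => simp [σ₂, AddMonoidAlgebra.domCongr_single]

lemma mono_pow (a b : ℤ) (m : ℕ) : mono a b ^ m = mono (a * m) (b * m) := by
  induction m with
  | zero => simp [mono]; rfl
  | succ n ih =>
    rw [pow_succ, ih]
    simp only [mono, AddMonoidAlgebra.single_mul_single, one_mul]
    congr 1
    · simp [Prod.ext_iff]; constructor <;> push_cast <;> ring

/-- Lemma 2.2: if `σ(A) = η M^a L^b A` (`η = ±1`) and `I` is an ideal of `t^σ` containing
an element equal (in `t`) to `M^{am} L^{bm} A^{2m}` for some positive integer `m`, then the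
σ-invariant part `(A·t)^σ` of the ideal generated by `A` is contained in `√I`. -/
theorem sigma_part_subset_radical (A : LP2) (hA : A ≠ 0) (η : ℂ) (hη : η = 1 ∨ η = -1)
    (a b : ℤ) (hσA : σ₂ A = η • (mono a b * A))
    (I : Ideal fixedSub)
    (hI : ∃ m : ℕ, 0 < m ∧ ∃ x ∈ I, (x : LP2) = mono (a * m) (b * m) * A ^ (2 * m)) :
    ∀ x : fixedSub, (x : LP2) ∈ Ideal.span {A} → x ∈ I.radical := by
  intro x hx
  rw [Ideal.mem_span_singleton'] at hx
  obtain ⟨y, hy⟩ := hx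
  obtain ⟨m, hm, z, hz, hzA⟩ := hI
  have hxfix : σ₂ (x : LP2) = (x : LP2) := x.2
  -- second expression for x
  have hx2 : (x : LP2) = σ₂ y * (η • (mono a b * A)) := by
    rw [← hσA, ← map_mul, hy, hxfix]
  -- the invariant cofactor
  set w : LP2 := η ^ m • (y * σ₂ y) ^ m with hw_def
  have hwfix : w ∈ fixedSub := by
    show σ₂ w = w
    rw [hw_def, map_smul, map_pow, map_mul, sigma_invol, mul_comm]
  -- key identity
  have e0 : (x : LP2) * (x : LP2) = (y * A) * (σ₂ y * (η • (mono a b * A))) := by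
    nth_rewrite 1 [← hy]
    rw [hx2]
  have key : (x : LP2) ^ (2 * m) = (z : LP2) * w := by
    rw [hzA, hw_def]
    calc (x : LP2) ^ (2 * m) = ((x : LP2) * (x : LP2)) ^ m := by rw [← sq, ← pow_mul]
      _ = ((y * A) * (σ₂ y * (η • (mono a b * A)))) ^ m := by rw [e0]
      _ = mono (a * m) (b * m) * A ^ (2 * m) * (η ^ m • (y * σ₂ y) ^ m) := by
          simp only [Algebra.smul_def, map_pow, ← mono_pow]
          ring
  refine ⟨2 * m, ?_⟩
  have : x ^ (2 * m) = z * ⟨w, hwfix⟩ :=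
    Subtype.ext (by rw [MulMemClass.coe_mul, SubmonoidClass.coe_pow]; exact key)
  rw [this]
  exact Ideal.mul_mem_right _ _ hz
end
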